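/- Let M_p be a point module over a graded algebra A satisfying the standard hypotheses, with structure constants m_j·x_i = α_{j,i} m_{j+1}. If p ∈ Γ is such that at every degree j at least three of the four structure constants α_{j,0}, α_{j,1}, α_{j,2}, α_{j,3} are non-zero, then the M₂(A)-module M_p² = M_p ⊕ M_p, restricted to the subalgebra A^{G,μ} ⊆ M₂(A) generated by v₀ = diag(x₀,x₀), v₁ = diag(x₁,-x₁), v₂ = antidiag(x₂,x₂), v₃ = antidiag(-x₃,x₃), is generated in degree 0 and every non-zero graded submodule has finite codimension; hence M_p² is a fat point module of multiplicity 2 over A^{G,μ}. -/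

import Mathlib

/-- The underlying graded vector space of `M_p² = M_p ⊕ M_p`: in each degree `j ∈ ℕ` a copy
of `k²`, spanned by `(m_j, 0)` and `(0, m_j)`. -/
abbrev FatV (k : Type*) [Field k] := ℕ →₀ (Fin 2 → k)

/-- The degree-`j` matrix of the right action of the generator `vᵢ` of `A^{G,μ} ⊆ M₂(A)`
(where `v₀ = diag(x₀,x₀)`, `v₁ = diag(x₁,-x₁)`, `v₂ = antidiag(x₂,x₂)`,
`v₃ = antidiag(-x₃,x₃)`) on `M_p²`, expressed via the structure constants
`m_j · xᵢ = α j i • m_{j+1}` of the point module `M_p`. -/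
def fatMat (k : Type*) [Field k] (α : ℕ → Fin 4 → k) (i : Fin 4) (j : ℕ) :
    Matrix (Fin 2) (Fin 2) k :=
  if i = 0 then !![α j 0, 0; 0, α j 0]
  else if i = 1 then !![α j 1, 0; 0, -α j 1]
  else if i = 2 then !![0, α j 2; α j 2, 0]
  else !![0, α j 3; -α j 3, 0]

/-- The action of the generator `vᵢ` of `A^{G,μ}` on `M_p²` as a `k`-linear endomorphism:
it takes the degree-`j` component to the degree-`j+1` component by the matrix `fatMat i j`. -/
noncomputable def fatAct (k : Type*) [Field k] (α : ℕ → Fin 4 → k) (i : Fin 4) :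
    FatV k →ₗ[k] FatV k :=
  Finsupp.lsum k fun j => (Finsupp.lsingle (j + 1)).comp (Matrix.toLin' (fatMat k α i j))

lemma fatAct_single {k : Type*} [Field k] (α : ℕ → Fin 4 → k) (i : Fin 4) (j : ℕ)
    (f : Fin 2 → k) :
    fatAct k α i (Finsupp.single j f) =
      Finsupp.single (j + 1) ((fatMat k α i j).mulVec f) := by
  simp [fatAct, Matrix.toLin'_apply]

lemma pair_top {k : Type*} [Field k] (S : Submodule k (Fin 2 → k)) (u v : Fin 2 → k)
    (hu : u ∈ S) (hv : v ∈ S) (h : u 0 * v 1 - u 1 * v 0 ≠ 0) : S = ⊤ := by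
  rw [eq_top_iff]
  rintro f -
  have hf : f = ((u 0 * v 1 - u 1 * v 0)⁻¹ * (f 0 * v 1 - f 1 * v 0)) • u +
      ((u 0 * v 1 - u 1 * v 0)⁻¹ * (u 0 * f 1 - u 1 * f 0)) • v := by
    funext i
    fin_cases i <;> simp <;> field_simp <;> ring
  rw [hf]
  exact S.add_mem (S.smul_mem _ hu) (S.smul_mem _ hv)

lemma top_of_singles {k : Type*} [Field k] (N : Submodule k (FatV k))
    (h : ∀ j (f : Fin 2 → k), Finsupp.single j f ∈ N) : N = ⊤ := by
  rw [eq_top_iff]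
  intro v _
  induction v using Finsupp.induction with
  | zero => exact N.zero_mem
  | single_add j f v hj hf ih => exact N.add_mem (h j f) (ih trivial)

lemma pairNZ {k : Type*} [Field k] {α : ℕ → Fin 4 → k}
    (h3 : ∀ j : ℕ, ∃ a b c : Fin 4, a ≠ b ∧ a ≠ c ∧ b ≠ c ∧
      α j a ≠ 0 ∧ α j b ≠ 0 ∧ α j c ≠ 0) (j : ℕ) :
    ∀ i i' : Fin 4, i ≠ i' → α j i ≠ 0 ∨ α j i' ≠ 0 := by
  obtain ⟨a, b, c, hab, hac, hbc, ha, hb, hc⟩ := h3 j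
  intro i i' hii
  by_contra hcon
  push_neg at hcon
  obtain ⟨h1, h2⟩ := hcon
  have hia : i ≠ a := fun h => ha (h ▸ h1)
  have hib : i ≠ b := fun h => hb (h ▸ h1)
  have hic : i ≠ c := fun h => hc (h ▸ h1)
  have hia' : i' ≠ a := fun h => ha (h ▸ h2)
  have hib' : i' ≠ b := fun h => hb (h ▸ h2)
  have hic' : i' ≠ c := fun h => hc (h ▸ h2)
  omega

lemma step {k : Type*} [Field k] (h2 : (2 : k) ≠ 0) (α : ℕ → Fin 4 → k)
    (h3 : ∀ j : ℕ, ∃ a b c : Fin 4, a ≠ b ∧ a ≠ c ∧ b ≠ c ∧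
      α j a ≠ 0 ∧ α j b ≠ 0 ∧ α j c ≠ 0)
    (N : Submodule k (FatV k))
    (hstab : ∀ i : Fin 4, ∀ v ∈ N, fatAct k α i v ∈ N) (j : ℕ) (f : Fin 2 → k)
    (hf : f ≠ 0) (hmem : Finsupp.single j f ∈ N) :
    ∀ g : Fin 2 → k, Finsupp.single (j + 1) g ∈ N := by
  set S : Submodule k (Fin 2 → k) := N.comap (Finsupp.lsingle (j + 1)) with hSdef
  have hmemS : ∀ g : Fin 2 → k, g ∈ S ↔ Finsupp.single (j + 1) g ∈ N := fun g => by
    simp [hSdef, Submodule.mem_comap, Finsupp.lsingle_apply]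
  have hw : ∀ i : Fin 4, (fatMat k α i j).mulVec f ∈ S := by
    intro i
    rw [hmemS]
    have := hstab i _ hmem
    rwa [fatAct_single] at this
  suffices hST : S = ⊤ by
    intro g
    rw [← hmemS, hST]
    trivial
  have m0 : (fatMat k α 0 j).mulVec f = ![α j 0 * f 0, α j 0 * f 1] := by
    funext x; fin_cases x <;>
      simp [fatMat, Matrix.mulVec, dotProduct, Fin.sum_univ_two]
  have m1 : (fatMat k α 1 j).mulVec f = ![α j 1 * f 0, -(α j 1 * f 1)] := by
    funext x; fin_cases x <;>
      simp [fatMat, Matrix.mulVec, dotProduct, Fin.sum_univ_two]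
  have m2 : (fatMat k α 2 j).mulVec f = ![α j 2 * f 1, α j 2 * f 0] := by
    funext x; fin_cases x <;>
      simp [fatMat, Matrix.mulVec, dotProduct, Fin.sum_univ_two]
  have m3 : (fatMat k α 3 j).mulVec f = ![α j 3 * f 1, -(α j 3 * f 0)] := by
    funext x; fin_cases x <;>
      simp [fatMat, Matrix.mulVec, dotProduct, Fin.sum_univ_two]
  have hp := pairNZ h3 j
  by_cases hf0 : f 0 = 0
  · have hf1 : f 1 ≠ 0 := by
      intro h
      apply hf
      funext x
      fin_cases x
      · exact hf0
      · exact h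
    rcases hp 2 3 (by decide) with hc | hd
    · rcases hp 0 1 (by decide) with ha | hb
      · refine pair_top S _ _ (m2 ▸ hw 2) (m0 ▸ hw 0) ?_
        simp only [Matrix.cons_val_zero, Matrix.cons_val_one, Matrix.head_cons]
        exact ne_of_eq_of_ne (b := (α j 2 * α j 0) * (f 1 * f 1)) (by rw [hf0]; ring)
          (mul_ne_zero (mul_ne_zero hc ha) (mul_ne_zero hf1 hf1))
      · refine pair_top S _ _ (m2 ▸ hw 2) (m1 ▸ hw 1) ?_
        simp only [Matrix.cons_val_zero, Matrix.cons_val_one, Matrix.head_cons]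
        exact ne_of_eq_of_ne (b := -((α j 2 * α j 1) * (f 1 * f 1))) (by rw [hf0]; ring)
          (neg_ne_zero.mpr (mul_ne_zero (mul_ne_zero hc hb) (mul_ne_zero hf1 hf1)))
    · rcases hp 0 1 (by decide) with ha | hb
      · refine pair_top S _ _ (m3 ▸ hw 3) (m0 ▸ hw 0) ?_
        simp only [Matrix.cons_val_zero, Matrix.cons_val_one, Matrix.head_cons]
        exact ne_of_eq_of_ne (b := (α j 3 * α j 0) * (f 1 * f 1)) (by rw [hf0]; ring)
          (mul_ne_zero (mul_ne_zero hd ha) (mul_ne_zero hf1 hf1))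
      · refine pair_top S _ _ (m3 ▸ hw 3) (m1 ▸ hw 1) ?_
        simp only [Matrix.cons_val_zero, Matrix.cons_val_one, Matrix.head_cons]
        exact ne_of_eq_of_ne (b := -((α j 3 * α j 1) * (f 1 * f 1))) (by rw [hf0]; ring)
          (neg_ne_zero.mpr (mul_ne_zero (mul_ne_zero hd hb) (mul_ne_zero hf1 hf1)))
  · by_cases hf1 : f 1 = 0
    · rcases hp 0 1 (by decide) with ha | hb
      · rcases hp 2 3 (by decide) with hc | hd
        · refine pair_top S _ _ (m0 ▸ hw 0) (m2 ▸ hw 2) ?_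
          simp only [Matrix.cons_val_zero, Matrix.cons_val_one, Matrix.head_cons]
          exact ne_of_eq_of_ne (b := (α j 0 * α j 2) * (f 0 * f 0)) (by rw [hf1]; ring)
            (mul_ne_zero (mul_ne_zero ha hc) (mul_ne_zero hf0 hf0))
        · refine pair_top S _ _ (m0 ▸ hw 0) (m3 ▸ hw 3) ?_
          simp only [Matrix.cons_val_zero, Matrix.cons_val_one, Matrix.head_cons]
          exact ne_of_eq_of_ne (b := -((α j 0 * α j 3) * (f 0 * f 0))) (by rw [hf1]; ring)
            (neg_ne_zero.mpr (mul_ne_zero (mul_ne_zero ha hd) (mul_ne_zero hf0 hf0)))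
      · rcases hp 2 3 (by decide) with hc | hd
        · refine pair_top S _ _ (m1 ▸ hw 1) (m2 ▸ hw 2) ?_
          simp only [Matrix.cons_val_zero, Matrix.cons_val_one, Matrix.head_cons]
          exact ne_of_eq_of_ne (b := (α j 1 * α j 2) * (f 0 * f 0)) (by rw [hf1]; ring)
            (mul_ne_zero (mul_ne_zero hb hc) (mul_ne_zero hf0 hf0))
        · refine pair_top S _ _ (m1 ▸ hw 1) (m3 ▸ hw 3) ?_
          simp only [Matrix.cons_val_zero, Matrix.cons_val_one, Matrix.head_cons]
          exact ne_of_eq_of_ne (b := -((α j 1 * α j 3) * (f 0 * f 0))) (by rw [hf1]; ring)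
            (neg_ne_zero.mpr (mul_ne_zero (mul_ne_zero hb hd) (mul_ne_zero hf0 hf0)))
    · by_cases ha : α j 0 = 0
      · have hc := (hp 0 2 (by decide)).resolve_left (not_not_intro ha)
        have hd := (hp 0 3 (by decide)).resolve_left (not_not_intro ha)
        refine pair_top S _ _ (m2 ▸ hw 2) (m3 ▸ hw 3) ?_
        simp only [Matrix.cons_val_zero, Matrix.cons_val_one, Matrix.head_cons]
        exact ne_of_eq_of_ne (b := -(2 * (α j 2 * α j 3) * (f 0 * f 1))) (by ring)
          (neg_ne_zero.mpr (mul_ne_zero (mul_ne_zero h2 (mul_ne_zero hc hd))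
            (mul_ne_zero hf0 hf1)))
      · by_cases hb : α j 1 = 0
        · have hc := (hp 1 2 (by decide)).resolve_left (not_not_intro hb)
          have hd := (hp 1 3 (by decide)).resolve_left (not_not_intro hb)
          refine pair_top S _ _ (m2 ▸ hw 2) (m3 ▸ hw 3) ?_
          simp only [Matrix.cons_val_zero, Matrix.cons_val_one, Matrix.head_cons]
          exact ne_of_eq_of_ne (b := -(2 * (α j 2 * α j 3) * (f 0 * f 1))) (by ring)
            (neg_ne_zero.mpr (mul_ne_zero (mul_ne_zero h2 (mul_ne_zero hc hd))
              (mul_ne_zero hf0 hf1)))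
        · refine pair_top S _ _ (m0 ▸ hw 0) (m1 ▸ hw 1) ?_
          simp only [Matrix.cons_val_zero, Matrix.cons_val_one, Matrix.head_cons]
          exact ne_of_eq_of_ne (b := -(2 * (α j 0 * α j 1) * (f 0 * f 1))) (by ring)
            (neg_ne_zero.mpr (mul_ne_zero (mul_ne_zero h2 (mul_ne_zero ha hb))
              (mul_ne_zero hf0 hf1)))

lemma one_zero_ne {k : Type*} [Field k] : (![1, 0] : Fin 2 → k) ≠ 0 := by
  intro h
  have := congrFun h 0
  simp at this


/-- if at every degree `j` at least three of the four structure constants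
`α j 0, …, α j 3` of the point module `M_p` are non-zero, then `M_p² = M_p ⊕ M_p`, as a
module over the subalgebra `A^{G,μ} ⊆ M₂(A)` generated by `v₀,…,v₃` (equivalently, a
`k`-subspace stable under the four generator actions `fatAct i`), is generated in degree 0,
and every non-zero graded stable subspace has finite codimension: it contains all
components of sufficiently high degree.  Hence `M_p²` is a fat point module of
multiplicity 2 over `A^{G,μ}`. -/
theorem stmt17 {k : Type*} [Field k] (h2 : (2 : k) ≠ 0) (α : ℕ → Fin 4 → k)
    (h3 : ∀ j : ℕ, ∃ a b c : Fin 4, a ≠ b ∧ a ≠ c ∧ b ≠ c ∧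
      α j a ≠ 0 ∧ α j b ≠ 0 ∧ α j c ≠ 0) :
    (∀ N : Submodule k (FatV k),
      (∀ (i : Fin 4), ∀ v ∈ N, fatAct k α i v ∈ N) →
      (∀ f : Fin 2 → k, Finsupp.single 0 f ∈ N) → N = ⊤) ∧
    (∀ N : Submodule k (FatV k),
      (∀ (i : Fin 4), ∀ v ∈ N, fatAct k α i v ∈ N) →
      (∀ v ∈ N, ∀ j : ℕ, Finsupp.single j (v j) ∈ N) →
      N ≠ ⊥ → ∃ n : ℕ, ∀ j ≥ n, ∀ f : Fin 2 → k, Finsupp.single j f ∈ N) := by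

  constructor
  · intro N hstab h0
    refine top_of_singles N ?_
    intro j
    induction j with
    | zero => exact h0
    | succ j ih => exact step h2 α h3 N hstab j ![1, 0] one_zero_ne (ih ![1, 0])
  · intro N hstab hgr hne
    obtain ⟨v, hv, hv0⟩ := Submodule.ne_bot_iff N |>.mp hne
    obtain ⟨j, hj⟩ := Finsupp.ne_iff.mp hv0
    have hj' : v j ≠ 0 := by simpa using hj
    have hsj : Finsupp.single j (v j) ∈ N := hgr v hv j
    have full : ∀ m (g : Fin 2 → k), Finsupp.single (j + 1 + m) g ∈ N := by
      intro m
      induction m with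
      | zero => exact step h2 α h3 N hstab j (v j) hj' hsj
      | succ m ih =>
        exact step h2 α h3 N hstab (j + 1 + m) ![1, 0] one_zero_ne (ih ![1, 0])
    refine ⟨j + 1, fun j' hj'' g => ?_⟩
    obtain ⟨m, rfl⟩ : ∃ m, j' = j + 1 + m := ⟨j' - (j + 1), by omega⟩
    exact full m g
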